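/- Let n ≥ 2 and p ∈ (0,1], and let G(n,p) be the Erdős–Rényi random graph on n nodes. Then for every η with 0 < η ≤ 1, P(W_{G(n,p)} ≥ η) ≤ 3^{n+2}·exp(−n²pη³/32). -/

import Mathlib

open Finset MeasureTheory

noncomputable section

/-- The total mixing gap of a finite directed graph with node set `V` and link set `E`. -/
def mixingGap {V : Type*} [Fintype V] [DecidableEq V] (E : Finset (V × V)) : ℝ :=
  sSup {w : ℝ | ∃ S U : Finset V, Disjoint S U ∧
    w = |((E.filter fun e => e.1 ∈ S ∧ e.2 ∈ U).card : ℝ) / (E.card : ℝ) -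
      ((S.card : ℝ) * (U.card : ℝ)) / ((Fintype.card V : ℝ) * ((Fintype.card V : ℝ) - 1))|}

/-- The total mixing gap, with the convention that it equals `1` for graphs with no links. -/
def mixingGap' {V : Type*} [Fintype V] [DecidableEq V] (E : Finset (V × V)) : ℝ :=
  if E = ∅ then 1 else mixingGap E

/-- The Bernoulli measure on `Bool` with parameter `p`. -/
def berMeasure (p : ℝ) : Measure Bool :=
  (Real.toNNReal p) • Measure.dirac true + (Real.toNNReal (1 - p)) • Measure.dirac false

instance (p : ℝ) : IsFiniteMeasure (berMeasure p) := by
  unfold berMeasure; infer_instance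

/-- The law of an i.i.d. family of Bernoulli(p) random variables indexed by ordered
pairs of nodes. -/
def bernoulliPi (n : ℕ) (p : ℝ) : Measure ((Fin n × Fin n) → Bool) :=
  Measure.pi fun _ => berMeasure p

/-- The (directed) link set of the Erdős–Rényi random graph obtained from the Bernoulli
family `ω`: for each unordered pair `{i,j}` of distinct nodes, both directed links
`(i,j)` and `(j,i)` are present iff the Bernoulli variable of the pair equals `true`. -/
def erEdges (n : ℕ) (ω : (Fin n × Fin n) → Bool) : Finset (Fin n × Fin n) :=
  Finset.univ.filter fun e =>
    (e.1 < e.2 ∧ ω (e.1, e.2) = true) ∨ (e.2 < e.1 ∧ ω (e.2, e.1) = true)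

set_option maxHeartbeats 1000000

namespace ERaux


variable {n : ℕ} {p : ℝ}

/-- weight of one Bernoulli coordinate -/
def w (p : ℝ) (b : Bool) : ℝ := if b then p else 1 - p

/-- weight of a configuration -/
def Pw (p : ℝ) (ω : (Fin n × Fin n) → Bool) : ℝ := ∏ e, w p (ω e)

lemma w_nonneg (hp0 : 0 ≤ p) (hp1 : p ≤ 1) (b : Bool) : 0 ≤ w p b := by
  cases b <;> simp [w] <;> linarith

lemma Pw_nonneg (hp0 : 0 ≤ p) (hp1 : p ≤ 1) (ω : (Fin n × Fin n) → Bool) : 0 ≤ Pw p ω :=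
  Finset.prod_nonneg fun e _ => w_nonneg hp0 hp1 _

lemma berMeasure_singleton (hp0 : 0 ≤ p) (hp1 : p ≤ 1) (b : Bool) :
    berMeasure p {b} = ENNReal.ofReal (w p b) := by
  cases b <;>
    simp [berMeasure, w, Measure.dirac_apply', ENNReal.ofReal,
      Set.indicator, MeasurableSet.singleton]

lemma bernoulliPi_singleton (hp0 : 0 ≤ p) (hp1 : p ≤ 1) (ω : (Fin n × Fin n) → Bool) :
    bernoulliPi n p {ω} = ENNReal.ofReal (Pw p ω) := by
  have h1 : ({ω} : Set ((Fin n × Fin n) → Bool)) = Set.pi Set.univ (fun e => {ω e}) :=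
    (Set.univ_pi_singleton ω).symm
  rw [bernoulliPi, h1, Measure.pi_pi]
  calc ∏ e, (berMeasure p) {ω e} = ∏ e, ENNReal.ofReal (w p (ω e)) :=
        Finset.prod_congr rfl fun e _ => berMeasure_singleton hp0 hp1 _
    _ = ENNReal.ofReal (∏ e, w p (ω e)) :=
        (ENNReal.ofReal_prod_of_nonneg fun e _ => w_nonneg hp0 hp1 _).symm
    _ = ENNReal.ofReal (Pw p ω) := rfl

lemma bernoulliPi_finset (hp0 : 0 ≤ p) (hp1 : p ≤ 1) (s : Finset ((Fin n × Fin n) → Bool)) :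
    bernoulliPi n p ↑s = ENNReal.ofReal (∑ ω ∈ s, Pw p ω) := by
  classical
  induction s using Finset.induction with
  | empty => simp
  | @insert ω s hω ih =>
    rw [Finset.coe_insert, Set.insert_eq, measure_union (by simpa using hω)
      s.measurableSet, bernoulliPi_singleton hp0 hp1, ih, Finset.sum_insert hω,
      ENNReal.ofReal_add (Pw_nonneg hp0 hp1 _) (Finset.sum_nonneg fun _ _ => Pw_nonneg hp0 hp1 _)]

/-- number of `true` coordinates within `A` -/
def Scount (A : Finset (Fin n × Fin n)) (ω : (Fin n × Fin n) → Bool) : ℕ :=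
  (A.filter fun e => ω e = true).card

lemma factorization (g : (Fin n × Fin n) → Bool → ℝ) :
    ∑ ω : (Fin n × Fin n) → Bool, ∏ e, g e (ω e) = ∏ e, (g e true + g e false) := by
  classical
  have := Finset.prod_univ_sum (fun _ : Fin n × Fin n => (Finset.univ : Finset Bool)) g
  rw [Fintype.piFinset_univ] at this
  rw [← this]
  exact Finset.prod_congr rfl fun e _ => by simp

lemma core (hp0 : 0 ≤ p) (hp1 : p ≤ 1) (A : Finset (Fin n × Fin n)) (r a : ℝ) :
    ∑ ω ∈ Finset.univ.filter (fun ω => a ≤ r * (Scount A ω : ℝ)), Pw p ω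
      ≤ Real.exp (-a) * (p * Real.exp r + (1 - p)) ^ A.card := by
  classical
  set F := fun ω : (Fin n × Fin n) → Bool => Pw p ω * Real.exp (r * (Scount A ω : ℝ) - a)
  have hF0 : ∀ ω, 0 ≤ F ω := fun ω =>
    mul_nonneg (Pw_nonneg hp0 hp1 ω) (Real.exp_nonneg _)
  have step1 : ∑ ω ∈ Finset.univ.filter (fun ω => a ≤ r * (Scount A ω : ℝ)), Pw p ω
      ≤ ∑ ω : (Fin n × Fin n) → Bool, F ω := by
    refine le_trans (Finset.sum_le_sum fun ω hω => ?_)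
      (Finset.sum_le_sum_of_subset_of_nonneg (Finset.subset_univ _) fun ω _ _ => hF0 ω)
    have hω' : a ≤ r * (Scount A ω : ℝ) := (Finset.mem_filter.1 hω).2
    have : (1 : ℝ) ≤ Real.exp (r * (Scount A ω : ℝ) - a) := by
      rw [← Real.exp_zero]; exact Real.exp_le_exp.2 (by linarith)
    calc Pw p ω = Pw p ω * 1 := by ring
      _ ≤ F ω := by
        exact mul_le_mul_of_nonneg_left this (Pw_nonneg hp0 hp1 ω)
  have hprod : ∀ ω : (Fin n × Fin n) → Bool, F ω =
      Real.exp (-a) * ∏ e, (w p (ω e) *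
        (if e ∈ A then Real.exp (r * (if ω e then 1 else 0)) else 1)) := by
    intro ω
    have hS : (Scount A ω : ℝ) = ∑ e ∈ A, (if ω e then (1:ℝ) else 0) := by
      rw [Scount, Finset.card_filter]; push_cast; simp
    have h2 : (∏ e, (if e ∈ A then Real.exp (r * (if ω e then 1 else 0)) else 1))
        = Real.exp (r * (Scount A ω : ℝ)) := by
      rw [Finset.prod_ite_mem, Finset.univ_inter, hS, Finset.mul_sum, Real.exp_sum]
    rw [Finset.prod_mul_distrib, h2]
    simp only [F]
    unfold Pw
    rw [Real.exp_sub, Real.exp_neg]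
    ring
  have step2 : ∑ ω : (Fin n × Fin n) → Bool, F ω
      = Real.exp (-a) * (p * Real.exp r + (1 - p)) ^ A.card := by
    have hfac : (∑ ω : (Fin n × Fin n) → Bool, ∏ e,
        (w p (ω e) * (if e ∈ A then Real.exp (r * (if ω e then 1 else 0)) else 1)))
        = ∏ e : Fin n × Fin n, ((w p true * (if e ∈ A then Real.exp (r * 1) else 1))
          + (w p false * (if e ∈ A then Real.exp (r * 0) else 1))) :=
      factorization (fun e b => w p b *
        (if e ∈ A then Real.exp (r * (if b then 1 else 0)) else 1))
    simp_rw [hprod]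
    rw [← Finset.mul_sum, hfac]
    congr 1
    have : ∀ e : Fin n × Fin n,
        (w p true * (if e ∈ A then Real.exp (r * 1) else 1)
          + w p false * (if e ∈ A then Real.exp (r * 0) else 1))
        = (if e ∈ A then p * Real.exp r + (1 - p) else 1) := by
      intro e; by_cases h : e ∈ A <;> simp [h, w] <;> ring
    simp_rw [this]
    rw [Finset.prod_ite_mem, Finset.univ_inter, Finset.prod_const]
  exact step1.trans_eq step2



lemma exp_le_quad {l : ℝ} (hl0 : 0 ≤ l) (hl1 : l ≤ 1) :
    Real.exp l ≤ 1 + l + (3/4) * l^2 := by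
  have h := Real.exp_bound (x := l) (by rw [abs_of_nonneg hl0]; exact hl1) (n := 2) (by norm_num)
  have h2 : ∑ m ∈ Finset.range 2, l ^ m / m.factorial = 1 + l := by
    simp [Finset.sum_range_succ]
  rw [h2, abs_of_nonneg hl0] at h
  have := (abs_sub_le_iff.1 h).1
  norm_num at this ⊢
  nlinarith
lemma exp_neg_le_quad {l : ℝ} (hl0 : 0 ≤ l) (hl1 : l ≤ 1) :
    Real.exp (-l) ≤ 1 - l + (3/4) * l^2 := by
  have h := Real.exp_bound (x := -l) (by rw [abs_neg, abs_of_nonneg hl0]; exact hl1)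
    (n := 2) (by norm_num)
  have h2 : ∑ m ∈ Finset.range 2, (-l) ^ m / m.factorial = 1 - l := by
    simp [Finset.sum_range_succ]; ring
  rw [h2, abs_neg, abs_of_nonneg hl0] at h
  have := (abs_sub_le_iff.1 h).1
  norm_num at this ⊢
  nlinarith

lemma ber_factor_le {p r : ℝ} (hp0 : 0 ≤ p) (hp1 : p ≤ 1) (k : ℕ) :
    (p * Real.exp r + (1 - p)) ^ k ≤ Real.exp ((k : ℝ) * (p * (Real.exp r - 1))) := by
  have h1 : p * Real.exp r + (1 - p) = 1 + p * (Real.exp r - 1) := by ring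
  have h2 : (0:ℝ) ≤ p * Real.exp r + (1 - p) :=
    add_nonneg (mul_nonneg hp0 (Real.exp_nonneg _)) (by linarith)
  calc (p * Real.exp r + (1 - p)) ^ k ≤ (Real.exp (p * (Real.exp r - 1))) ^ k := by
        apply pow_le_pow_left₀ h2
        rw [h1]; linarith [Real.add_one_le_exp (p * (Real.exp r - 1))]
    _ = Real.exp ((k : ℝ) * (p * (Real.exp r - 1))) := by
        rw [← Real.exp_nat_mul]

lemma exists_lambda {p Nr t B : ℝ} (hp : 0 < p) (k : ℕ) (hk : (k : ℝ) ≤ Nr)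
    (ht : 0 < t) (hB1 : B ≤ t / 2) (hB2 : B ≤ t^2 / (3 * Nr * p)) :
    ∃ l : ℝ, 0 < l ∧ l ≤ 1 ∧ -l * t + (3/4) * ((k:ℝ) * p) * l^2 ≤ -B := by
  by_cases h : 3 * (k : ℝ) * p ≤ 2 * t
  · exact ⟨1, one_pos, le_refl 1, by nlinarith⟩
  · push_neg at h
    have hkp : 0 < (k : ℝ) * p := by nlinarith
    have hk0 : (0:ℝ) < (k:ℝ) := by nlinarith
    have h3 : (0:ℝ) < 3 * (k:ℝ) * p := by nlinarith
    refine ⟨2 * t / (3 * (k:ℝ) * p), div_pos (by linarith) h3, ?_, ?_⟩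
    · rw [div_le_one h3]; linarith
    · have hval : -(2 * t / (3 * (k:ℝ) * p)) * t + (3/4) * ((k:ℝ) * p) * (2 * t / (3 * (k:ℝ) * p))^2
          = -(t^2 / (3 * (k:ℝ) * p)) := by
        field_simp
        ring
      rw [hval, neg_le_neg_iff]
      calc B ≤ t^2 / (3 * Nr * p) := hB2
        _ ≤ t^2 / (3 * (k:ℝ) * p) := by
            apply div_le_div_of_nonneg_left (by positivity) h3
            nlinarith

lemma tail_up_meas (hp0 : 0 ≤ p) (hp1 : p ≤ 1) (A : Finset (Fin n × Fin n)) {t l : ℝ}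
    (hl0 : 0 < l) (hl1 : l ≤ 1) :
    bernoulliPi n p ↑(Finset.univ.filter
        fun ω : (Fin n × Fin n) → Bool => (A.card : ℝ) * p + t ≤ (Scount A ω : ℝ))
      ≤ ENNReal.ofReal (Real.exp (-l * t + (3/4) * ((A.card : ℝ) * p) * l ^ 2)) := by
  rw [bernoulliPi_finset hp0 hp1]
  apply ENNReal.ofReal_le_ofReal
  have hset : (Finset.univ.filter
        fun ω : (Fin n × Fin n) → Bool => (A.card : ℝ) * p + t ≤ (Scount A ω : ℝ))
      = Finset.univ.filter
        (fun ω => l * ((A.card : ℝ) * p + t) ≤ l * (Scount A ω : ℝ)) := by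
    apply Finset.filter_congr; intro ω _
    constructor
    · intro h; exact mul_le_mul_of_nonneg_left h hl0.le
    · intro h; exact le_of_mul_le_mul_left h hl0
  rw [hset]
  have hkp : (0:ℝ) ≤ (A.card : ℝ) * p := mul_nonneg (Nat.cast_nonneg _) hp0
  calc ∑ ω ∈ Finset.univ.filter
        (fun ω : (Fin n × Fin n) → Bool => l * ((A.card : ℝ) * p + t) ≤ l * (Scount A ω : ℝ)),
        Pw p ω
      ≤ Real.exp (-(l * ((A.card : ℝ) * p + t))) * (p * Real.exp l + (1 - p)) ^ A.card :=
        core hp0 hp1 A l _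
    _ ≤ Real.exp (-(l * ((A.card : ℝ) * p + t)))
        * Real.exp ((A.card : ℝ) * (p * (Real.exp l - 1))) :=
        mul_le_mul_of_nonneg_left (ber_factor_le hp0 hp1 _) (Real.exp_nonneg _)
    _ = Real.exp (-(l * ((A.card : ℝ) * p + t)) + (A.card : ℝ) * (p * (Real.exp l - 1))) :=
        (Real.exp_add _ _).symm
    _ ≤ Real.exp (-l * t + (3/4) * ((A.card : ℝ) * p) * l ^ 2) := by
        apply Real.exp_le_exp.2
        have hq := exp_le_quad hl0.le hl1
        nlinarith [mul_le_mul_of_nonneg_left hq hkp]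

lemma tail_low_meas (hp0 : 0 ≤ p) (hp1 : p ≤ 1) (A : Finset (Fin n × Fin n)) {t l : ℝ}
    (hl0 : 0 < l) (hl1 : l ≤ 1) :
    bernoulliPi n p ↑(Finset.univ.filter
        fun ω : (Fin n × Fin n) → Bool => (Scount A ω : ℝ) ≤ (A.card : ℝ) * p - t)
      ≤ ENNReal.ofReal (Real.exp (-l * t + (3/4) * ((A.card : ℝ) * p) * l ^ 2)) := by
  rw [bernoulliPi_finset hp0 hp1]
  apply ENNReal.ofReal_le_ofReal
  have hset : (Finset.univ.filter
        fun ω : (Fin n × Fin n) → Bool => (Scount A ω : ℝ) ≤ (A.card : ℝ) * p - t)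
      = Finset.univ.filter
        (fun ω => l * (t - (A.card : ℝ) * p) ≤ (-l) * (Scount A ω : ℝ)) := by
    apply Finset.filter_congr; intro ω _
    constructor
    · intro h; nlinarith
    · intro h; nlinarith
  rw [hset]
  have hkp : (0:ℝ) ≤ (A.card : ℝ) * p := mul_nonneg (Nat.cast_nonneg _) hp0
  calc ∑ ω ∈ Finset.univ.filter
        (fun ω : (Fin n × Fin n) → Bool => l * (t - (A.card : ℝ) * p) ≤ (-l) * (Scount A ω : ℝ)),
        Pw p ω
      ≤ Real.exp (-(l * (t - (A.card : ℝ) * p))) * (p * Real.exp (-l) + (1 - p)) ^ A.card :=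
        core hp0 hp1 A (-l) _
    _ ≤ Real.exp (-(l * (t - (A.card : ℝ) * p)))
        * Real.exp ((A.card : ℝ) * (p * (Real.exp (-l) - 1))) :=
        mul_le_mul_of_nonneg_left (ber_factor_le hp0 hp1 _) (Real.exp_nonneg _)
    _ = Real.exp (-(l * (t - (A.card : ℝ) * p)) + (A.card : ℝ) * (p * (Real.exp (-l) - 1))) :=
        (Real.exp_add _ _).symm
    _ ≤ Real.exp (-l * t + (3/4) * ((A.card : ℝ) * p) * l ^ 2) := by
        apply Real.exp_le_exp.2
        have hq := exp_neg_le_quad hl0.le hl1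
        nlinarith [mul_le_mul_of_nonneg_left hq hkp]

lemma event_bound_up (hp0 : 0 < p) (hp1 : p ≤ 1) {Nr t B : ℝ} (A : Finset (Fin n × Fin n))
    (hk : (A.card : ℝ) ≤ Nr) (ht : 0 < t) (hB1 : B ≤ t / 2) (hB2 : B ≤ t^2 / (3 * Nr * p)) :
    bernoulliPi n p ↑(Finset.univ.filter
        fun ω : (Fin n × Fin n) → Bool => (A.card : ℝ) * p + t ≤ (Scount A ω : ℝ))
      ≤ ENNReal.ofReal (Real.exp (-B)) := by
  obtain ⟨l, hl0, hl1, hval⟩ := exists_lambda (p := p) (Nr := Nr) hp0 A.card hk ht hB1 hB2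
  exact (tail_up_meas hp0.le hp1 A hl0 hl1).trans
    (ENNReal.ofReal_le_ofReal (Real.exp_le_exp.2 hval))

lemma event_bound_low (hp0 : 0 < p) (hp1 : p ≤ 1) {Nr t B : ℝ} (A : Finset (Fin n × Fin n))
    (hk : (A.card : ℝ) ≤ Nr) (ht : 0 < t) (hB1 : B ≤ t / 2) (hB2 : B ≤ t^2 / (3 * Nr * p)) :
    bernoulliPi n p ↑(Finset.univ.filter
        fun ω : (Fin n × Fin n) → Bool => (Scount A ω : ℝ) ≤ (A.card : ℝ) * p - t)
      ≤ ENNReal.ofReal (Real.exp (-B)) := by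
  obtain ⟨l, hl0, hl1, hval⟩ := exists_lambda (p := p) (Nr := Nr) hp0 A.card hk ht hB1 hB2
  exact (tail_low_meas hp0.le hp1 A hl0 hl1).trans
    (ENNReal.ofReal_le_ofReal (Real.exp_le_exp.2 hval))

/-- the set of "pair indices": ordered pairs (i,j) with i < j -/
def A0 (n : ℕ) : Finset (Fin n × Fin n) := Finset.univ.filter (fun e => e.1 < e.2)

/-- normalized crossing pairs between S and U -/
def Apair (S U : Finset (Fin n)) : Finset (Fin n × Fin n) :=
  (S ×ˢ U).image (fun e => if e.1 < e.2 then e else (e.2, e.1))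

lemma card_A0 (n : ℕ) : 2 * (A0 n).card + n = n * n := by
  classical
  set b := (Finset.univ : Finset (Fin n × Fin n)).filter (fun e => e.2 < e.1) with hb
  set c := (Finset.univ : Finset (Fin n × Fin n)).filter (fun e => e.1 = e.2) with hc
  have hswap : b.card = (A0 n).card := by
    apply Finset.card_bij (fun e _ => (e.2, e.1))
    · intro e he
      simp only [hb, Finset.mem_filter, Finset.mem_univ, true_and] at he
      simp only [A0, Finset.mem_filter, Finset.mem_univ, true_and]
      exact he
    · intro e he e' he' h
      exact Prod.ext (congrArg Prod.snd h) (congrArg Prod.fst h)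
    · intro e he
      simp only [A0, Finset.mem_filter, Finset.mem_univ, true_and] at he
      exact ⟨(e.2, e.1), by simp [hb, he], rfl⟩
  have hdiag : c.card = n := by
    have : c.card = (Finset.univ : Finset (Fin n)).card := by
      apply Finset.card_bij (fun e _ => e.1)
      · intro e _; exact Finset.mem_univ _
      · intro e he e' he' h
        simp only [hc, Finset.mem_filter, Finset.mem_univ, true_and] at he he'
        exact Prod.ext h (by rw [← he, ← he', h])
      · intro i _; exact ⟨(i, i), by simp [hc], rfl⟩
    simp [this]
  have hbc : Disjoint b c := by
    rw [Finset.disjoint_left]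
    intro e he he'
    simp only [hb, hc, Finset.mem_filter, Finset.mem_univ, true_and] at he he'
    exact absurd he' (ne_of_gt he)
  have habc : Disjoint (A0 n) (b ∪ c) := by
    rw [Finset.disjoint_left]
    intro e he he'
    simp only [A0, hb, hc, Finset.mem_union, Finset.mem_filter, Finset.mem_univ,
      true_and] at he he'
    rcases he' with h | h
    · exact lt_asymm he h
    · exact absurd h (ne_of_lt he)
  have huniv : (A0 n) ∪ (b ∪ c) = Finset.univ := by
    apply Finset.eq_univ_of_forall
    intro e
    simp only [A0, hb, hc, Finset.mem_union, Finset.mem_filter, Finset.mem_univ, true_and]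
    rcases lt_trichotomy e.1 e.2 with h | h | h
    · exact Or.inl h
    · exact Or.inr (Or.inr h)
    · exact Or.inr (Or.inl h)
  have : (A0 n).card + (b.card + c.card) = n * n := by
    rw [← Finset.card_union_of_disjoint hbc, ← Finset.card_union_of_disjoint habc, huniv]
    simp
  omega

lemma erEdges_card (ω : (Fin n × Fin n) → Bool) :
    (erEdges n ω).card = 2 * Scount (A0 n) ω := by
  classical
  have hsplit : erEdges n ω
      = ((Finset.univ : Finset (Fin n × Fin n)).filter (fun e => e.1 < e.2 ∧ ω (e.1, e.2)))
        ∪ ((Finset.univ : Finset (Fin n × Fin n)).filter (fun e => e.2 < e.1 ∧ ω (e.2, e.1))) := by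
    rw [erEdges, ← Finset.filter_or]
  have hdisj : Disjoint
      ((Finset.univ : Finset (Fin n × Fin n)).filter (fun e => e.1 < e.2 ∧ ω (e.1, e.2)))
      ((Finset.univ : Finset (Fin n × Fin n)).filter (fun e => e.2 < e.1 ∧ ω (e.2, e.1))) := by
    rw [Finset.disjoint_left]
    intro e he he'
    simp only [Finset.mem_filter, Finset.mem_univ, true_and] at he he'
    exact lt_asymm he.1 he'.1
  have h1 : ((Finset.univ : Finset (Fin n × Fin n)).filter
      (fun e => e.1 < e.2 ∧ ω (e.1, e.2))).card = Scount (A0 n) ω := by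
    rw [Scount, A0, Finset.filter_filter]
  have h2 : ((Finset.univ : Finset (Fin n × Fin n)).filter
      (fun e => e.2 < e.1 ∧ ω (e.2, e.1))).card = Scount (A0 n) ω := by
    rw [Scount, A0, Finset.filter_filter]
    apply Finset.card_bij (fun e _ => (e.2, e.1))
    · intro e he
      simp only [Finset.mem_filter, Finset.mem_univ, true_and] at he ⊢
      exact he
    · intro e he e' he' h
      exact Prod.ext (congrArg Prod.snd h) (congrArg Prod.fst h)
    · intro e he
      simp only [Finset.mem_filter, Finset.mem_univ, true_and] at he
      exact ⟨(e.2, e.1), by simp only [Finset.mem_filter, Finset.mem_univ, true_and]; exact he, rfl⟩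
  rw [hsplit, Finset.card_union_of_disjoint hdisj, h1, h2]
  omega

lemma Apair_card {S U : Finset (Fin n)} (hSU : Disjoint S U) :
    (Apair S U).card = S.card * U.card := by
  classical
  rw [Apair, Finset.card_image_of_injOn, Finset.card_product]
  intro e he e' he' h
  simp only [Finset.coe_product, Set.mem_prod, Finset.mem_coe] at he he'
  have hne : e.1 ≠ e.2 := fun hh => (Finset.disjoint_left.1 hSU he.1) (hh ▸ he.2)
  have hne' : e'.1 ≠ e'.2 := fun hh => (Finset.disjoint_left.1 hSU he'.1) (hh ▸ he'.2)
  by_cases h1 : e.1 < e.2 <;> by_cases h2 : e'.1 < e'.2 <;> simp only [h1, h2, if_pos, if_neg,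
    if_true, if_false] at h
  · exact h
  · have ha : e.1 = e'.2 := congrArg Prod.fst h
    exact absurd (ha ▸ he.1) (Finset.disjoint_left.1 (disjoint_comm.1 hSU) he'.2)
  · have ha : e.2 = e'.1 := congrArg Prod.fst h
    exact absurd (ha ▸ he.2) (Finset.disjoint_left.1 hSU he'.1)
  · exact Prod.ext (congrArg Prod.snd h) (congrArg Prod.fst h)

lemma crossing_count {S U : Finset (Fin n)} (hSU : Disjoint S U)
    (ω : (Fin n × Fin n) → Bool) :
    ((erEdges n ω).filter fun e => e.1 ∈ S ∧ e.2 ∈ U).card = Scount (Apair S U) ω := by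
  classical
  rw [Scount]
  apply Finset.card_bij (fun e _ => if e.1 < e.2 then e else (e.2, e.1))
  · intro e he
    simp only [erEdges, Finset.mem_filter, Finset.mem_univ, true_and] at he
    obtain ⟨hcond, hS, hU⟩ := he
    simp only [Finset.mem_filter]
    rcases hcond with ⟨hlt, hω⟩ | ⟨hlt, hω⟩
    · rw [if_pos hlt]
      constructor
      · exact Finset.mem_image.2 ⟨e, Finset.mem_product.2 ⟨hS, hU⟩, by rw [if_pos hlt]⟩
      · rw [show ((e.1, e.2) : Fin n × Fin n) = e from rfl] at hω
        exact hω
    · rw [if_neg (by exact lt_asymm hlt)]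
      constructor
      · exact Finset.mem_image.2 ⟨e, Finset.mem_product.2 ⟨hS, hU⟩,
          by rw [if_neg (lt_asymm hlt)]⟩
      · exact hω
  · intro e he e' he' h
    simp only [erEdges, Finset.mem_filter, Finset.mem_univ, true_and] at he he'
    obtain ⟨_, hS, hU⟩ := he
    obtain ⟨_, hS', hU'⟩ := he'
    by_cases h1 : e.1 < e.2 <;> by_cases h2 : e'.1 < e'.2 <;>
      simp only [h1, h2, if_pos, if_neg, if_true, if_false] at h
    · exact h
    · have ha : e.1 = e'.2 := congrArg Prod.fst h
      exact absurd hS (fun hs => (Finset.disjoint_left.1 hSU hs) (by rw [ha]; exact hU'))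
    · have ha : e.2 = e'.1 := congrArg Prod.fst h
      exact absurd hU (fun hu => (Finset.disjoint_left.1 hSU (by rw [ha]; exact hS')) hu)
    · exact Prod.ext (congrArg Prod.snd h) (congrArg Prod.fst h)
  · intro b hb
    simp only [Finset.mem_filter, Apair, Finset.mem_image] at hb
    obtain ⟨⟨e, hmem, hnorm⟩, hωb⟩ := hb
    obtain ⟨hS, hU⟩ := Finset.mem_product.1 hmem
    have hne : e.1 ≠ e.2 := fun hh => (Finset.disjoint_left.1 hSU hS) (hh ▸ hU)
    refine ⟨e, ?_, ?_⟩
    · simp only [erEdges, Finset.mem_filter, Finset.mem_univ, true_and]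
      refine ⟨?_, hS, hU⟩
      by_cases h1 : e.1 < e.2
      · left
        rw [if_pos h1] at hnorm
        exact ⟨h1, by rw [show ((e.1, e.2) : Fin n × Fin n) = e from rfl, hnorm]; exact hωb⟩
      · right
        have h2 : e.2 < e.1 := lt_of_le_of_ne (not_lt.1 h1) (fun hh => hne hh.symm)
        rw [if_neg h1] at hnorm
        exact ⟨h2, by rw [hnorm]; exact hωb⟩
    · exact hnorm

lemma gap_bound {η : ℝ} (hn : 2 ≤ n) (hp0 : 0 < p) (hp1 : p ≤ 1) (hη0 : 0 < η) (hη1 : η ≤ 1)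
    (ω : (Fin n × Fin n) → Bool) {t0 : ℝ}
    (ht0 : t0 = η * (((A0 n).card : ℝ) * p) / 2)
    (hX1 : ((A0 n).card : ℝ) * p - t0 < (Scount (A0 n) ω : ℝ))
    (hX2 : (Scount (A0 n) ω : ℝ) < ((A0 n).card : ℝ) * p + t0)
    (hY : ∀ S U : Finset (Fin n), Disjoint S U →
      |(Scount (Apair S U) ω : ℝ) - ((S.card : ℝ) * (U.card : ℝ)) * p| ≤ t0) :
    mixingGap' (erEdges n ω) < η := by
  classical
  set Nr : ℝ := ((A0 n).card : ℝ) with hNr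
  have hcard : 2 * (A0 n).card + n = n * n := card_A0 n
  have hcardR : 2 * Nr + (n : ℝ) = (n : ℝ) * (n : ℝ) := by
    rw [hNr]; exact_mod_cast hcard
  have hn2 : (2 : ℝ) ≤ (n : ℝ) := by exact_mod_cast hn
  have hNr0 : 0 < Nr := by nlinarith
  have hNp : 0 < Nr * p := mul_pos hNr0 hp0
  have ht0pos : 0 < t0 := by rw [ht0]; positivity
  set X : ℝ := (Scount (A0 n) ω : ℝ) with hXdef
  have hm : ((erEdges n ω).card : ℝ) = 2 * X := by
    rw [hXdef]; exact_mod_cast erEdges_card (n := n) ω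
  have ht0Np : t0 ≤ Nr * p / 2 := by rw [ht0]; nlinarith
  have hmpos : 0 < ((erEdges n ω).card : ℝ) := by
    rw [hm]; nlinarith
  have hne : erEdges n ω ≠ ∅ := by
    intro h
    rw [h] at hmpos
    simp at hmpos
  rw [mixingGap', if_neg hne, mixingGap]
  -- every element of the defining set is at most 2 * t0 / m
  have hbound : ∀ w ∈ {w : ℝ | ∃ S U : Finset (Fin n), Disjoint S U ∧
      w = |(((erEdges n ω).filter fun e => e.1 ∈ S ∧ e.2 ∈ U).card : ℝ) / ((erEdges n ω).card : ℝ) -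
        ((S.card : ℝ) * (U.card : ℝ)) / ((Fintype.card (Fin n) : ℝ) * ((Fintype.card (Fin n) : ℝ) - 1))|},
      w ≤ 2 * t0 / ((erEdges n ω).card : ℝ) := by
    rintro w ⟨S, U, hSU, rfl⟩
    have hYc : (((erEdges n ω).filter fun e => e.1 ∈ S ∧ e.2 ∈ U).card : ℝ)
        = (Scount (Apair S U) ω : ℝ) := by exact_mod_cast crossing_count hSU ω
    set Y : ℝ := (Scount (Apair S U) ω : ℝ) with hYdef
    set a : ℝ := (S.card : ℝ) with hadef
    set b : ℝ := (U.card : ℝ) with hbdef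
    have hab : a * b ≤ Nr := by
      have hle : S.card + U.card ≤ n := by
        rw [← Finset.card_union_of_disjoint hSU]
        exact (Finset.card_le_univ _).trans (by simp)
      have hleR : a + b ≤ (n : ℝ) := by rw [hadef, hbdef]; exact_mod_cast hle
      have ha0 : 0 ≤ a := Nat.cast_nonneg _
      have hb0 : 0 ≤ b := Nat.cast_nonneg _
      nlinarith [sq_nonneg (a - b)]
    have hD1 : |Y - a * b * p| ≤ t0 := hY S U hSU
    have hD2 : |Nr * p - X| ≤ t0 := by
      rw [abs_le]; constructor <;> nlinarith
    have hfc : (Fintype.card (Fin n) : ℝ) = (n : ℝ) := by simp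
    have hdenom : (Fintype.card (Fin n) : ℝ) * ((Fintype.card (Fin n) : ℝ) - 1) = 2 * Nr := by
      rw [hfc]; nlinarith
    rw [hYc, hdenom]
    have key : Y / ((erEdges n ω).card : ℝ) - a * b / (2 * Nr)
        = (2 * Nr * (Y - a * b * p) + 2 * (a * b) * (Nr * p - X))
          / (((erEdges n ω).card : ℝ) * (2 * Nr)) := by
      rw [hm]
      have hXne : X ≠ 0 := by nlinarith
      have hNrne : Nr ≠ 0 := ne_of_gt hNr0
      field_simp
      ring
    rw [key, abs_div, abs_of_pos (by positivity : (0:ℝ) < ((erEdges n ω).card : ℝ) * (2 * Nr))]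
    rw [div_le_div_iff₀ (by positivity) hmpos]
    have habs : |2 * Nr * (Y - a * b * p) + 2 * (a * b) * (Nr * p - X)|
        ≤ 2 * Nr * t0 + 2 * Nr * t0 := by
      have h1 : |2 * Nr * (Y - a * b * p)| ≤ 2 * Nr * t0 := by
        rw [abs_mul, abs_of_pos (by positivity : (0:ℝ) < 2 * Nr)]
        nlinarith
      have h2 : |2 * (a * b) * (Nr * p - X)| ≤ 2 * Nr * t0 := by
        rw [abs_mul]
        have hab0 : (0:ℝ) ≤ a * b := mul_nonneg (Nat.cast_nonneg _) (Nat.cast_nonneg _)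
        have : |2 * (a * b)| = 2 * (a * b) := abs_of_nonneg (by positivity)
        rw [this]
        nlinarith [abs_nonneg (Nr * p - X)]
      calc |2 * Nr * (Y - a * b * p) + 2 * (a * b) * (Nr * p - X)|
          ≤ |2 * Nr * (Y - a * b * p)| + |2 * (a * b) * (Nr * p - X)| := abs_add_le _ _
        _ ≤ 2 * Nr * t0 + 2 * Nr * t0 := add_le_add h1 h2
    nlinarith
  have hnonempty : ∃ w, w ∈ {w : ℝ | ∃ S U : Finset (Fin n), Disjoint S U ∧
      w = |(((erEdges n ω).filter fun e => e.1 ∈ S ∧ e.2 ∈ U).card : ℝ) / ((erEdges n ω).card : ℝ) -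
        ((S.card : ℝ) * (U.card : ℝ)) / ((Fintype.card (Fin n) : ℝ) * ((Fintype.card (Fin n) : ℝ) - 1))|} := by
    refine ⟨_, ⟨∅, ∅, Finset.disjoint_empty_left _, rfl⟩⟩
  have hsup := csSup_le hnonempty hbound
  refine lt_of_le_of_lt hsup ?_
  rw [div_lt_iff₀ hmpos]
  have : Nr * p < ((erEdges n ω).card : ℝ) := by rw [hm]; nlinarith
  rw [ht0]
  nlinarith

lemma Apair_card_le {S U : Finset (Fin n)} (hn : 2 ≤ n) (hSU : Disjoint S U) :
    ((Apair S U).card : ℝ) ≤ ((A0 n).card : ℝ) := by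
  have hcardR : 2 * ((A0 n).card : ℝ) + (n : ℝ) = (n : ℝ) * (n : ℝ) := by
    exact_mod_cast card_A0 n
  have hn2 : (2 : ℝ) ≤ (n : ℝ) := by exact_mod_cast hn
  rw [Apair_card hSU]
  have hle : S.card + U.card ≤ n := by
    rw [← Finset.card_union_of_disjoint hSU]
    exact (Finset.card_le_univ _).trans (by simp)
  have hleR : (S.card : ℝ) + (U.card : ℝ) ≤ (n : ℝ) := by exact_mod_cast hle
  have ha0 : (0:ℝ) ≤ (S.card : ℝ) := Nat.cast_nonneg _
  have hb0 : (0:ℝ) ≤ (U.card : ℝ) := Nat.cast_nonneg _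
  push_cast
  nlinarith [sq_nonneg ((S.card : ℝ) - (U.card : ℝ))]

lemma card_disjoint_pairs (n : ℕ) :
    ((Finset.univ : Finset (Finset (Fin n) × Finset (Fin n))).filter
      (fun x => Disjoint x.1 x.2)).card ≤ 3 ^ n := by
  classical
  have h := Finset.card_le_card_of_injOn
    (s := (Finset.univ : Finset (Finset (Fin n) × Finset (Fin n))).filter
      (fun x => Disjoint x.1 x.2))
    (f := fun x : Finset (Fin n) × Finset (Fin n) =>
      (fun v => if v ∈ x.1 then (0 : Fin 3) else if v ∈ x.2 then 1 else 2))
    (t := (Finset.univ : Finset (Fin n → Fin 3)))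
    (fun x _ => Finset.mem_univ _) ?_
  · calc ((Finset.univ : Finset (Finset (Fin n) × Finset (Fin n))).filter
        (fun x => Disjoint x.1 x.2)).card
        ≤ (Finset.univ : Finset (Fin n → Fin 3)).card := h
      _ = 3 ^ n := by simp
  · intro x hx y hy hxy
    simp only [Finset.coe_filter, Set.mem_setOf_eq, Finset.mem_univ, true_and] at hx hy
    have hfun : ∀ v : Fin n, (if v ∈ x.1 then (0 : Fin 3) else if v ∈ x.2 then 1 else 2)
        = (if v ∈ y.1 then (0 : Fin 3) else if v ∈ y.2 then 1 else 2) := fun v => congrFun hxy v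
    apply Prod.ext
    · ext v
      have hv := hfun v
      constructor
      · intro h1
        rw [if_pos h1] at hv
        by_contra h2
        rw [if_neg h2] at hv
        by_cases h3 : v ∈ y.2 <;> simp [h3] at hv
      · intro h1
        rw [if_pos h1] at hv
        by_contra h2
        rw [if_neg h2] at hv
        by_cases h3 : v ∈ x.2 <;> simp [h3] at hv
    · ext v
      have hv := hfun v
      constructor
      · intro h1
        have hx1 : v ∉ x.1 := fun hh => (Finset.disjoint_left.1 hx hh) h1
        rw [if_neg hx1, if_pos h1] at hv
        by_contra h2
        by_cases h3 : v ∈ y.1 <;> simp [h3, h2] at hv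
      · intro h1
        have hy1 : v ∉ y.1 := fun hh => (Finset.disjoint_left.1 hy hh) h1
        rw [if_neg hy1, if_pos h1] at hv
        by_contra h2
        by_cases h3 : v ∈ x.1 <;> simp [h3, h2] at hv

end ERaux

open scoped ENNReal

open ERaux in
/-- Proposition: tail bound for the total mixing gap of Erdős–Rényi
random graphs: `P(W_{G(n,p)} ≥ η) ≤ 3^{n+2} exp(−n²pη³/32)` for `0 < η ≤ 1`. -/
theorem erdosRenyi_mixingGap_tail (n : ℕ) (hn : 2 ≤ n) (p : ℝ) (hp0 : 0 < p)
    (hp1 : p ≤ 1) (η : ℝ) (hη0 : 0 < η) (hη1 : η ≤ 1) :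
    bernoulliPi n p {ω | η ≤ mixingGap' (erEdges n ω)} ≤
      ENNReal.ofReal ((3 : ℝ) ^ (n + 2) * Real.exp (-((n : ℝ) ^ 2 * p * η ^ 3) / 32)) := by
  classical
  have h1p : (0:ℝ) ≤ 1 - p := by linarith
  have hber : IsProbabilityMeasure (berMeasure p) := by
    constructor
    have huniv : berMeasure p Set.univ = ENNReal.ofReal p + ENNReal.ofReal (1-p) := by
      simp [berMeasure, ENNReal.ofReal]
    rw [huniv, ← ENNReal.ofReal_add hp0.le h1p]
    norm_num
  haveI := hber
  haveI hprob : IsProbabilityMeasure (bernoulliPi n p) := by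
    rw [bernoulliPi]; infer_instance
  set B : ℝ := (n:ℝ)^2 * p * η^3 / 32 with hB
  have hargB : -((n : ℝ) ^ 2 * p * η ^ 3) / 32 = -B := by rw [hB]; ring
  by_cases htriv : B ≤ ((n:ℝ) + 2) * Real.log 3
  · -- trivial case: the right-hand side is at least 1
    have hexp : Real.exp (((n:ℝ)+2) * Real.log 3) = 3^(n+2) := by
      rw [show ((n:ℝ)+2) = ((n+2 : ℕ) : ℝ) by push_cast; ring, Real.exp_nat_mul,
        Real.exp_log (by norm_num : (0:ℝ) < 3)]
    have hmono : Real.exp (-(((n:ℝ)+2) * Real.log 3)) ≤ Real.exp (-B) :=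
      Real.exp_le_exp.2 (by linarith)
    have h1le : (1:ℝ) ≤ 3^(n+2) * Real.exp (-B) := by
      calc (1:ℝ) = Real.exp (((n:ℝ)+2) * Real.log 3)
            * Real.exp (-(((n:ℝ)+2) * Real.log 3)) := by rw [← Real.exp_add]; simp
        _ ≤ 3^(n+2) * Real.exp (-B) := by
            rw [hexp]; exact mul_le_mul_of_nonneg_left hmono (by positivity)
    calc bernoulliPi n p {ω | η ≤ mixingGap' (erEdges n ω)} ≤ 1 := prob_le_one
      _ = ENNReal.ofReal 1 := by simp
      _ ≤ ENNReal.ofReal ((3 : ℝ) ^ (n + 2) * Real.exp (-((n : ℝ) ^ 2 * p * η ^ 3) / 32)) := by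
          apply ENNReal.ofReal_le_ofReal
          rw [hargB]
          exact h1le
  · push_neg at htriv
    have hlog1 : (1:ℝ) ≤ Real.log 3 := by
      rw [Real.le_log_iff_exp_le (by norm_num : (0:ℝ) < 3)]
      exact Real.exp_one_lt_d9.le.trans (by norm_num)
    have hnR : (2:ℝ) ≤ (n:ℝ) := by exact_mod_cast hn
    have hη3 : η^3 ≤ 1 := by simpa using pow_le_pow_left₀ hη0.le hη1 3
    have hη2 : η^2 ≤ 1 := by simpa using pow_le_pow_left₀ hη0.le hη1 2
    have hpη : p * η^3 ≤ 1 := by nlinarith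
    have hn2big : 32 * ((n:ℝ) + 2) < (n:ℝ)^2 := by
      nlinarith [mul_le_mul_of_nonneg_left hlog1 (show (0:ℝ) ≤ (n:ℝ)+2 by linarith),
        mul_le_mul_of_nonneg_left hpη (sq_nonneg (n:ℝ))]
    have hn4 : (4:ℝ) ≤ (n:ℝ) := by nlinarith [hn2big, hnR]
    have hcardR : 2 * ((A0 n).card : ℝ) + (n : ℝ) = (n : ℝ) * (n : ℝ) := by
      exact_mod_cast card_A0 n
    set Nr : ℝ := ((A0 n).card : ℝ) with hNr
    have hNr38 : 3 * (n:ℝ)^2 / 8 ≤ Nr := by nlinarith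
    have hNr0 : 0 < Nr := by nlinarith
    set t0 : ℝ := η * (Nr * p) / 2 with ht0
    have ht0pos : 0 < t0 := by rw [ht0]; positivity
    have hB1 : B ≤ t0 / 2 := by
      rw [hB, ht0]
      nlinarith [mul_le_mul_of_nonneg_right hNr38 (mul_pos hη0 hp0).le,
        mul_le_mul_of_nonneg_right hη2 (show (0:ℝ) ≤ (n:ℝ)^2 * p * η by positivity),
        show (0:ℝ) ≤ (n:ℝ)^2 * p * η^3 by positivity]
    have hB2 : B ≤ t0^2 / (3 * Nr * p) := by
      rw [le_div_iff₀ (by positivity), hB, ht0]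
      nlinarith [mul_le_mul_of_nonneg_right hNr38
          (show (0:ℝ) ≤ η^2 * Nr * p^2 / 4 by positivity),
        mul_le_mul_of_nonneg_right (show η^3 ≤ η^2 by nlinarith)
          (show (0:ℝ) ≤ (n:ℝ)^2 * Nr * p^2 by positivity)]
    set c : ℝ≥0∞ := ENNReal.ofReal (Real.exp (-B)) with hc
    set P := (Finset.univ : Finset (Finset (Fin n) × Finset (Fin n))).filter
      (fun x => Disjoint x.1 x.2) with hP
    set Eup := Finset.univ.filter
      (fun ω : (Fin n × Fin n) → Bool => ((A0 n).card : ℝ) * p + t0 ≤ (Scount (A0 n) ω : ℝ))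
      with hEup
    set Elow := Finset.univ.filter
      (fun ω : (Fin n × Fin n) → Bool => (Scount (A0 n) ω : ℝ) ≤ ((A0 n).card : ℝ) * p - t0)
      with hElow
    set Fup := fun x : Finset (Fin n) × Finset (Fin n) => Finset.univ.filter
      (fun ω : (Fin n × Fin n) → Bool =>
        ((Apair x.1 x.2).card : ℝ) * p + t0 ≤ (Scount (Apair x.1 x.2) ω : ℝ)) with hFup
    set Flow := fun x : Finset (Fin n) × Finset (Fin n) => Finset.univ.filter
      (fun ω : (Fin n × Fin n) → Bool =>
        (Scount (Apair x.1 x.2) ω : ℝ) ≤ ((Apair x.1 x.2).card : ℝ) * p - t0) with hFlow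
    have hsub : {ω | η ≤ mixingGap' (erEdges n ω)} ⊆
        (↑Eup ∪ ↑Elow) ∪ (⋃ x ∈ P, (↑(Fup x) ∪ ↑(Flow x) : Set ((Fin n × Fin n) → Bool))) := by
      intro ω hω
      by_contra hnot
      simp only [Set.mem_union, Set.mem_iUnion, not_or, not_exists] at hnot
      obtain ⟨⟨hnup, hnlow⟩, hnx⟩ := hnot
      have hX2 : (Scount (A0 n) ω : ℝ) < ((A0 n).card : ℝ) * p + t0 := by
        by_contra hcon
        exact hnup (by rw [hEup]; simp only [Finset.coe_filter, Set.mem_setOf_eq,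
          Finset.mem_univ, true_and]; linarith)
      have hX1 : ((A0 n).card : ℝ) * p - t0 < (Scount (A0 n) ω : ℝ) := by
        by_contra hcon
        exact hnlow (by rw [hElow]; simp only [Finset.coe_filter, Set.mem_setOf_eq,
          Finset.mem_univ, true_and]; linarith)
      have hY : ∀ S U : Finset (Fin n), Disjoint S U →
          |(Scount (Apair S U) ω : ℝ) - ((S.card : ℝ) * (U.card : ℝ)) * p| ≤ t0 := by
        intro S U hSU
        have hmemP : (S, U) ∈ P := by rw [hP]; simpa using hSU
        have hnF := hnx (S, U)
        simp only [hmemP, Set.mem_union, not_or, exists_prop, true_and] at hnF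
        obtain ⟨hnu, hnl⟩ := hnF trivial
        have hu : (Scount (Apair S U) ω : ℝ) < ((Apair S U).card : ℝ) * p + t0 := by
          by_contra hcon
          exact hnu (by rw [hFup]; simp only [Finset.coe_filter, Set.mem_setOf_eq,
            Finset.mem_univ, true_and]; linarith)
        have hl : ((Apair S U).card : ℝ) * p - t0 < (Scount (Apair S U) ω : ℝ) := by
          by_contra hcon
          exact hnl (by rw [hFlow]; simp only [Finset.coe_filter, Set.mem_setOf_eq,
            Finset.mem_univ, true_and]; linarith)
        have hcard : ((Apair S U).card : ℝ) = (S.card : ℝ) * (U.card : ℝ) := by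
          rw [Apair_card hSU]; push_cast; ring
        rw [abs_le]
        constructor <;> [linarith [hcard ▸ hl]; linarith [hcard ▸ hu]]
      have := gap_bound hn hp0 hp1 hη0 hη1 ω (by rw [ht0, hNr]) hX1 hX2 hY
      have hω' : η ≤ mixingGap' (erEdges n ω) := hω
      linarith
    have hEupB : bernoulliPi n p ↑Eup ≤ c :=
      event_bound_up (Nr := Nr) hp0 hp1 (A0 n) (le_of_eq hNr.symm) ht0pos hB1 hB2
    have hElowB : bernoulliPi n p ↑Elow ≤ c :=
      event_bound_low (Nr := Nr) hp0 hp1 (A0 n) (le_of_eq hNr.symm) ht0pos hB1 hB2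
    have hFupB : ∀ x ∈ P, bernoulliPi n p ↑(Fup x) ≤ c := by
      intro x hx
      rw [hP, Finset.mem_filter] at hx
      exact event_bound_up (Nr := Nr) hp0 hp1 (Apair x.1 x.2)
        (Apair_card_le hn hx.2) ht0pos hB1 hB2
    have hFlowB : ∀ x ∈ P, bernoulliPi n p ↑(Flow x) ≤ c := by
      intro x hx
      rw [hP, Finset.mem_filter] at hx
      exact event_bound_low (Nr := Nr) hp0 hp1 (Apair x.1 x.2)
        (Apair_card_le hn hx.2) ht0pos hB1 hB2
    have hPcard : (P.card : ℝ≥0∞) ≤ ((3^n : ℕ) : ℝ≥0∞) := by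
      exact_mod_cast Nat.cast_le.2 (hP ▸ card_disjoint_pairs n)
    calc bernoulliPi n p {ω | η ≤ mixingGap' (erEdges n ω)}
        ≤ bernoulliPi n p ((↑Eup ∪ ↑Elow) ∪ (⋃ x ∈ P, (↑(Fup x) ∪ ↑(Flow x)))) :=
          measure_mono hsub
      _ ≤ bernoulliPi n p (↑Eup ∪ ↑Elow)
          + bernoulliPi n p (⋃ x ∈ P, (↑(Fup x) ∪ ↑(Flow x))) := measure_union_le _ _
      _ ≤ (bernoulliPi n p ↑Eup + bernoulliPi n p ↑Elow)
          + ∑ x ∈ P, bernoulliPi n p (↑(Fup x) ∪ ↑(Flow x)) :=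
          add_le_add (measure_union_le _ _) (measure_biUnion_finset_le _ _)
      _ ≤ (c + c) + ∑ x ∈ P, (c + c) := by
          refine add_le_add (add_le_add hEupB hElowB) (Finset.sum_le_sum fun x hx => ?_)
          exact le_trans (measure_union_le _ _) (add_le_add (hFupB x hx) (hFlowB x hx))
      _ = (2 + 2 * (P.card : ℝ≥0∞)) * c := by
          rw [Finset.sum_const, nsmul_eq_mul]
          ring
      _ ≤ (2 + 2 * ((3^n : ℕ) : ℝ≥0∞)) * c := by
          apply mul_le_mul_left
          exact add_le_add_right (mul_le_mul_right hPcard 2) 2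
      _ ≤ ENNReal.ofReal ((3 : ℝ) ^ (n + 2) * Real.exp (-((n : ℝ) ^ 2 * p * η ^ 3) / 32)) := by
          rw [hargB]
          have h2 : (2 + 2 * ((3^n : ℕ) : ℝ≥0∞)) = ENNReal.ofReal (2 + 2 * (3:ℝ)^n) := by
            rw [ENNReal.ofReal_add (by norm_num) (by positivity),
              ENNReal.ofReal_mul (by norm_num),
              show ((3:ℝ)^n) = (((3^n : ℕ)) : ℝ) by push_cast; ring,
              ENNReal.ofReal_natCast]
            norm_num [ENNReal.ofReal_ofNat]
          rw [h2, hc, ← ENNReal.ofReal_mul (by positivity)]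
          apply ENNReal.ofReal_le_ofReal
          have h3 : (1:ℝ) ≤ 3^n := by exact_mod_cast Nat.one_le_pow n 3 (by norm_num)
          have hsplit : (3:ℝ)^(n+2) = 3^n * 9 := by rw [pow_add]; norm_num
          rw [hsplit]
          nlinarith [Real.exp_pos (-B), h3]

end
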